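/- The friction coefficient of the Allen–Cahn equation with relaxation is smaller than one: the improper integrals ∫_{−1}^1 √(2F(s)) F''(s) ds and ∫_{−1}^1 F'(s)²/√(2F(s)) ds both converge, and ∫_{−1}^1 √(2F(s)) F''(s) ds = −∫_{−1}^1 F'(s)²/√(2F(s)) ds < 0. Consequently, setting D_∞ := ∫_{−1}^1 √(2F(s)) ds, for every τ > 0 the constant γ_τ := 1 + (√2 τ / D_∞) ∫_{−1}^1 √(F(s)) F''(s) ds satisfies γ_τ = 1 − (τ/D_∞) ∫_{−1}^1 F'(s)²/√(2F(s)) ds < 1. -/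

import Mathlib

open MeasureTheory

open Set in
lemma AC_local_bound {F : ℝ → ℝ} (hd : Differentiable ℝ F) (hd' : Differentiable ℝ (deriv F))
    (hc'' : Continuous (deriv (deriv F))) {a : ℝ}
    (ha0 : F a = 0) (ha1 : deriv F a = 0) (ha2 : 0 < deriv (deriv F) a) :
    ∃ δ : ℝ, 0 < δ ∧ δ ≤ 1/2 ∧
      (∀ s ∈ Set.Icc (a - δ) (a + δ), (deriv F s) ^ 2 ≤ (9 * deriv (deriv F) a) * F s) ∧
      (∀ s ∈ Set.Icc (a - δ) (a + δ), s ≠ a → deriv F s ≠ 0) := by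
  set c : ℝ := deriv (deriv F) a / 2 with hc
  have hcpos : 0 < c := by positivity
  obtain ⟨δ0, hδ0, hball⟩ := Metric.continuousAt_iff.mp hc''.continuousAt c hcpos
  refine ⟨min (δ0 / 2) (1 / 2), by positivity, min_le_right _ _, ?_⟩
  set δ := min (δ0 / 2) (1 / 2) with hδdef
  have hδpos : 0 < δ := by positivity
  set D := Set.Icc (a - δ) (a + δ) with hD
  -- bounds on F'' on D
  have hbd : ∀ x ∈ D, c ≤ deriv (deriv F) x ∧ deriv (deriv F) x ≤ 3 * c := by
    intro x hx
    have hdist : dist x a < δ0 := by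
      rw [Real.dist_eq]
      have h1 : a - δ ≤ x := hx.1
      have h2 : x ≤ a + δ := hx.2
      have : δ < δ0 := lt_of_le_of_lt (min_le_left _ _) (by linarith)
      rw [abs_lt]; constructor <;> linarith
    have := hball hdist
    rw [Real.dist_eq, abs_lt] at this
    have h2c : deriv (deriv F) a = 2 * c := by rw [hc]; ring
    constructor <;> linarith [this.1, this.2]
  have hconv : Convex ℝ D := convex_Icc _ _
  have haD : a ∈ D := by constructor <;> [linarith; linarith]
  have hintD : interior D ⊆ D := interior_subset
  -- F' bounds
  have hlow : ∀ x ∈ D, ∀ y ∈ D, x ≤ y → c * (y - x) ≤ deriv F y - deriv F x :=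
    hconv.mul_sub_le_image_sub_of_le_deriv hd'.continuous.continuousOn hd'.differentiableOn
      (fun x hx => (hbd x (hintD hx)).1)
  have hup : ∀ x ∈ D, ∀ y ∈ D, x ≤ y → deriv F y - deriv F x ≤ 3 * c * (y - x) :=
    hconv.image_sub_le_mul_sub_of_deriv_le hd'.continuous.continuousOn hd'.differentiableOn
      (fun x hx => (hbd x (hintD hx)).2)
  -- lower bound on F via auxiliary function g
  set g : ℝ → ℝ := fun t => F t - c / 2 * (t - a) ^ 2 with hg
  have hgd : ∀ t, HasDerivAt g (deriv F t - c * (t - a)) t := by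
    intro t
    have h1 : HasDerivAt (fun t : ℝ => c / 2 * (t - a) ^ 2) (c * (t - a)) t := by
      have := (((hasDerivAt_id t).sub_const a).pow 2).const_mul (c / 2)
      exact this.congr_deriv (by rw [show (2:ℕ) - 1 = 1 from rfl]; simp only [id_eq]; push_cast; ring)
    exact ((hd t).hasDerivAt).sub h1
  have hgderiv : ∀ t, deriv g t = deriv F t - c * (t - a) := fun t => (hgd t).deriv
  have hga : g a = 0 := by simp [hg, ha0]
  have hFlow : ∀ s ∈ D, c / 2 * (s - a) ^ 2 ≤ F s := by
    intro s hs
    rcases le_total a s with hsa | hsa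
    · -- right side: g monotone on Icc a (a+δ)
      have hmono : MonotoneOn g (Set.Icc a (a + δ)) := by
        apply monotoneOn_of_deriv_nonneg (convex_Icc _ _)
          ((hd.continuous.continuousOn).sub (by fun_prop))
          ((hd.differentiableOn).sub (by fun_prop))
        intro t ht
        rw [interior_Icc] at ht
        change 0 ≤ deriv g t
        rw [hgderiv]
        have h1 : t ∈ D := ⟨by linarith [ht.1], le_of_lt ht.2⟩
        have := hlow a haD t h1 (le_of_lt ht.1)
        rw [ha1] at this; linarith
      have h1 : s ∈ Set.Icc a (a + δ) := ⟨hsa, hs.2⟩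
      have h2 : a ∈ Set.Icc a (a + δ) := ⟨le_rfl, by linarith⟩
      have := hmono h2 h1 hsa
      rw [hga] at this
      simpa [hg] using this
    · have hanti : AntitoneOn g (Set.Icc (a - δ) a) := by
        apply antitoneOn_of_deriv_nonpos (convex_Icc _ _)
          ((hd.continuous.continuousOn).sub (by fun_prop))
          ((hd.differentiableOn).sub (by fun_prop))
        intro t ht
        rw [interior_Icc] at ht
        change deriv g t ≤ 0
        rw [hgderiv]
        have h1 : t ∈ D := ⟨le_of_lt ht.1, by linarith [ht.2]⟩
        have := hlow t h1 a haD (le_of_lt ht.2)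
        rw [ha1] at this; nlinarith [ht.2]
      have h1 : s ∈ Set.Icc (a - δ) a := ⟨hs.1, hsa⟩
      have h2 : a ∈ Set.Icc (a - δ) a := ⟨by linarith, le_rfl⟩
      have := hanti h1 h2 hsa
      rw [hga] at this
      simpa [hg] using this
  -- |F'| bound and sign
  have hsign : ∀ s ∈ D, (a ≤ s → c * (s - a) ≤ deriv F s ∧ deriv F s ≤ 3 * c * (s - a)) ∧
      (s ≤ a → 3 * c * (s - a) ≤ deriv F s ∧ deriv F s ≤ c * (s - a)) := by
    intro s hs
    constructor
    · intro hsa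
      have h1 := hlow a haD s hs hsa
      have h2 := hup a haD s hs hsa
      rw [ha1] at h1 h2
      constructor <;> linarith
    · intro hsa
      have h1 := hlow s hs a haD hsa
      have h2 := hup s hs a haD hsa
      rw [ha1] at h1 h2
      constructor <;> linarith
  refine ⟨?_, ?_⟩
  · intro s hs
    have hF := hFlow s hs
    have h2c : deriv (deriv F) a = 2 * c := by rw [hc]; ring
    rw [h2c]
    rcases le_total a s with hsa | hsa
    · obtain ⟨hl, hu⟩ := (hsign s hs).1 hsa
      nlinarith [sq_nonneg (s - a), hcpos]
    · obtain ⟨hl, hu⟩ := (hsign s hs).2 hsa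
      nlinarith [sq_nonneg (s - a), hcpos]
  · intro s hs hne
    rcases lt_or_gt_of_ne hne with h | h
    · obtain ⟨hl, hu⟩ := (hsign s hs).2 (le_of_lt h)
      have : deriv F s < 0 := by nlinarith
      linarith
    · obtain ⟨hl, hu⟩ := (hsign s hs).1 (le_of_lt h)
      have : 0 < deriv F s := by nlinarith
      linarith

/-- The friction coefficient of the Allen–Cahn equation with relaxation is
smaller than one: the improper integrals `∫_{−1}^1 √(2F) F''` and
`∫_{−1}^1 F'²/√(2F)` converge, they satisfy
`∫ √(2F) F'' = −∫ F'²/√(2F) < 0`, and for every `τ > 0` the constant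
`γ_τ := 1 + (√2 τ / D_∞) ∫ √F F''` (with `D_∞ := ∫ √(2F)`) equals
`1 − (τ/D_∞) ∫ F'²/√(2F)` and is `< 1`. -/
theorem relaxation_friction_coefficient_lt_one
    (F : ℝ → ℝ) (hF : ContDiff ℝ 2 F)
    (h1 : F 1 = 0) (h1' : F (-1) = 0)
    (h2 : deriv F 1 = 0) (h2' : deriv F (-1) = 0)
    (h3 : 0 < deriv (deriv F) 1) (h3' : 0 < deriv (deriv F) (-1))
    (h4 : ∀ s : ℝ, s ≠ 1 → s ≠ -1 → 0 < F s)
    (τ : ℝ) (hτ : 0 < τ) :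
    IntegrableOn (fun s => Real.sqrt (2 * F s) * deriv (deriv F) s)
      (Set.Ioo (-1 : ℝ) 1) ∧
    IntegrableOn (fun s => (deriv F s) ^ 2 / Real.sqrt (2 * F s))
      (Set.Ioo (-1 : ℝ) 1) ∧
    (∫ s in Set.Ioo (-1 : ℝ) 1, Real.sqrt (2 * F s) * deriv (deriv F) s) =
      -∫ s in Set.Ioo (-1 : ℝ) 1, (deriv F s) ^ 2 / Real.sqrt (2 * F s) ∧
    (∫ s in Set.Ioo (-1 : ℝ) 1, Real.sqrt (2 * F s) * deriv (deriv F) s) < 0 ∧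
    (1 + (Real.sqrt 2 * τ / ∫ s in Set.Ioo (-1 : ℝ) 1, Real.sqrt (2 * F s)) *
        ∫ s in Set.Ioo (-1 : ℝ) 1, Real.sqrt (F s) * deriv (deriv F) s) =
      1 - (τ / ∫ s in Set.Ioo (-1 : ℝ) 1, Real.sqrt (2 * F s)) *
        ∫ s in Set.Ioo (-1 : ℝ) 1, (deriv F s) ^ 2 / Real.sqrt (2 * F s) ∧
    (1 + (Real.sqrt 2 * τ / ∫ s in Set.Ioo (-1 : ℝ) 1, Real.sqrt (2 * F s)) *
        ∫ s in Set.Ioo (-1 : ℝ) 1, Real.sqrt (F s) * deriv (deriv F) s) < 1 := by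

  -- regularity facts
  have hdF : Differentiable ℝ F := hF.differentiable (by norm_num)
  have hd1 : ContDiff ℝ 1 (deriv F) := by
    have h21 : ContDiff ℝ (1 + 1 : ℕ) F := by exact_mod_cast hF
    exact ((contDiff_succ_iff_deriv).mp h21).2.2
  have hdF' : Differentiable ℝ (deriv F) := hd1.differentiable one_ne_zero
  have hc'' : Continuous (deriv (deriv F)) := hd1.continuous_deriv le_rfl
  have hFc : Continuous F := hdF.continuous
  have hF'c : Continuous (deriv F) := hdF'.continuous
  -- local bounds at endpoints
  obtain ⟨δ₁, hδ₁pos, hδ₁le, hB1, hN1⟩ := AC_local_bound hdF hdF' hc'' h1 h2 h3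
  obtain ⟨δ₂, hδ₂pos, hδ₂le, hB2, hN2⟩ := AC_local_bound hdF hdF' hc'' h1' h2' h3'
  -- middle compact set
  set K : Set ℝ := Set.Icc (-1 + δ₂) (1 - δ₁) with hK
  have hKne : K.Nonempty := ⟨0, by constructor <;> [linarith; linarith]⟩
  have hKsub : K ⊆ Set.Ioo (-1 : ℝ) 1 := by
    intro s hs
    exact ⟨by linarith [hs.1], by linarith [hs.2]⟩
  have hKpos : ∀ s ∈ K, 0 < F s := by
    intro s hs
    have h := hKsub hs
    exact h4 s (by linarith [h.2]) (by linarith [h.1])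
  obtain ⟨x0, hx0K, hmin⟩ := isCompact_Icc.exists_isMinOn hKne hFc.continuousOn
  obtain ⟨x1, hx1K, hmax⟩ := isCompact_Icc.exists_isMaxOn hKne ((hF'c.pow 2).continuousOn)
  set m := F x0 with hm
  have hmpos : 0 < m := hKpos x0 hx0K
  set M := (deriv F x1) ^ 2 with hM
  have hMnonneg : 0 ≤ M := sq_nonneg _
  set C := max (max (9 * deriv (deriv F) 1) (9 * deriv (deriv F) (-1))) (M / m) with hCdef
  have hC0 : 0 ≤ C := le_trans (by positivity) (le_max_right _ _)
  -- global inequality F'^2 ≤ C F on Ioo(-1,1)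
  have hFpos : ∀ s ∈ Set.Ioo (-1 : ℝ) 1, 0 < F s := by
    intro s hs; exact h4 s (ne_of_lt hs.2) (ne_of_gt hs.1)
  have hC : ∀ s ∈ Set.Ioo (-1 : ℝ) 1, (deriv F s) ^ 2 ≤ C * F s := by
    intro s hs
    have hFs := hFpos s hs
    rcases le_or_gt (1 - δ₁) s with hr | hr
    · have hsI : s ∈ Set.Icc (1 - δ₁) (1 + δ₁) := ⟨hr, by linarith [hs.2]⟩
      calc (deriv F s) ^ 2 ≤ (9 * deriv (deriv F) 1) * F s := hB1 s hsI
        _ ≤ C * F s := by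
            apply mul_le_mul_of_nonneg_right _ hFs.le
            exact le_trans (le_max_left _ _) (le_max_left _ _)
    rcases le_or_gt s (-1 + δ₂) with hl | hl
    · have hsI : s ∈ Set.Icc (-1 - δ₂) (-1 + δ₂) := ⟨by linarith [hs.1], hl⟩
      calc (deriv F s) ^ 2 ≤ (9 * deriv (deriv F) (-1)) * F s := hB2 s hsI
        _ ≤ C * F s := by
            apply mul_le_mul_of_nonneg_right _ hFs.le
            exact le_trans (le_max_right _ _) (le_max_left _ _)
    · have hsK : s ∈ K := ⟨hl.le, hr.le⟩
      have h1m : m ≤ F s := hmin hsK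
      have h2M : (deriv F s) ^ 2 ≤ M := hmax hsK
      have hMm : M / m ≤ C := le_max_right _ _
      calc (deriv F s) ^ 2 ≤ M := h2M
        _ = (M / m) * m := by field_simp
        _ ≤ (M / m) * F s := by
            apply mul_le_mul_of_nonneg_left h1m (by positivity)
        _ ≤ C * F s := mul_le_mul_of_nonneg_right hMm hFs.le
  -- the two integrands
  set f1 : ℝ → ℝ := fun s => Real.sqrt (2 * F s) * deriv (deriv F) s with hf1def
  set f2 : ℝ → ℝ := fun s => (deriv F s) ^ 2 / Real.sqrt (2 * F s) with hf2def
  have hf2nonneg : ∀ s, 0 ≤ f2 s := fun s => div_nonneg (sq_nonneg _) (Real.sqrt_nonneg _)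
  have hf1cont : Continuous f1 := (Real.continuous_sqrt.comp (by fun_prop)).mul hc''
  have hf1int : IntegrableOn f1 (Set.Ioo (-1 : ℝ) 1) :=
    (hf1cont.integrableOn_Icc).mono_set Set.Ioo_subset_Icc_self
  -- boundedness of f2
  obtain ⟨x2, hx2, hFmax⟩ := isCompact_Icc.exists_isMaxOn (s := Set.Icc (-1 : ℝ) 1)
    ⟨0, by norm_num⟩ hFc.continuousOn
  set B := C * Real.sqrt (F x2) with hB
  have hf2bdd : ∀ s ∈ Set.Ioo (-1 : ℝ) 1, ‖f2 s‖ ≤ B := by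
    intro s hs
    have hFs := hFpos s hs
    have hs2F : (0 : ℝ) < Real.sqrt (2 * F s) := Real.sqrt_pos.mpr (by linarith)
    rw [Real.norm_eq_abs, abs_of_nonneg (hf2nonneg s)]
    have step1 : f2 s ≤ C * F s / Real.sqrt (2 * F s) := by
      exact div_le_div_of_nonneg_right (hC s hs) hs2F.le
    have step2 : C * F s / Real.sqrt (2 * F s) ≤ C * Real.sqrt (F s) := by
      have hle : Real.sqrt (F s) ≤ Real.sqrt (2 * F s) := Real.sqrt_le_sqrt (by linarith)
      have hsFpos : (0 : ℝ) < Real.sqrt (F s) := Real.sqrt_pos.mpr hFs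
      calc C * F s / Real.sqrt (2 * F s) ≤ C * F s / Real.sqrt (F s) := by
            apply div_le_div_of_nonneg_left (by positivity) hsFpos hle
        _ = C * (F s / Real.sqrt (F s)) := by ring
        _ = C * Real.sqrt (F s) := by rw [Real.div_sqrt]
    have step3 : C * Real.sqrt (F s) ≤ B := by
      apply mul_le_mul_of_nonneg_left _ hC0
      exact Real.sqrt_le_sqrt (hFmax ⟨hs.1.le, hs.2.le⟩)
    linarith
  have hf2meas : AEStronglyMeasurable f2 (volume.restrict (Set.Ioo (-1 : ℝ) 1)) := by
    apply ContinuousOn.aestronglyMeasurable _ measurableSet_Ioo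
    apply ContinuousOn.div (by fun_prop) (by fun_prop)
    intro s hs
    exact ne_of_gt (Real.sqrt_pos.mpr (by linarith [hFpos s hs]))
  have hf2int : IntegrableOn f2 (Set.Ioo (-1 : ℝ) 1) := by
    refine ⟨hf2meas, ?_⟩
    apply MeasureTheory.HasFiniteIntegral.restrict_of_bounded (C := B) measure_Ioo_lt_top
    exact (ae_restrict_iff' measurableSet_Ioo).2 (Filter.Eventually.of_forall hf2bdd)
  -- the FTC identity
  set G : ℝ → ℝ := fun s => Real.sqrt (2 * F s) * deriv F s with hGdef
  have hGcont : Continuous G := (Real.continuous_sqrt.comp (by fun_prop)).mul hF'c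
  have hGderiv : ∀ s ∈ Set.Ioo (-1 : ℝ) 1, HasDerivAt G (f1 s + f2 s) s := by
    intro s hs
    have hFs := hFpos s hs
    have h2F : (2 * F s) ≠ 0 := by linarith
    have hsqpos : (0 : ℝ) < Real.sqrt (2 * F s) := Real.sqrt_pos.mpr (by linarith)
    have hinner : HasDerivAt (fun t => 2 * F t) (2 * deriv F s) s :=
      ((hdF s).hasDerivAt).const_mul 2
    have hsq : HasDerivAt (fun t => Real.sqrt (2 * F t))
        (1 / (2 * Real.sqrt (2 * F s)) * (2 * deriv F s)) s :=
      (Real.hasDerivAt_sqrt h2F).comp s hinner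
    have htotal := hsq.mul ((hdF' s).hasDerivAt)
    refine htotal.congr_deriv ?_
    simp only [hf1def, hf2def]
    field_simp
    ring
  have hsum_int : IntegrableOn (fun s => f1 s + f2 s) (Set.Ioo (-1 : ℝ) 1) := hf1int.add hf2int
  have hii : IntervalIntegrable (fun s => f1 s + f2 s) volume (-1) 1 :=
    (intervalIntegrable_iff_integrableOn_Ioo_of_le (by norm_num)).mpr hsum_int
  have hftc := intervalIntegral.integral_eq_sub_of_hasDerivAt_of_le (by norm_num : (-1 : ℝ) ≤ 1)
    hGcont.continuousOn hGderiv hii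
  have hG1 : G 1 = 0 := by simp [hGdef, h2]
  have hG1' : G (-1) = 0 := by simp [hGdef, h2']
  have hzero : (∫ s in Set.Ioo (-1 : ℝ) 1, (f1 s + f2 s)) = 0 := by
    rw [← MeasureTheory.integral_Ioc_eq_integral_Ioo, ← intervalIntegral.integral_of_le
      (by norm_num : (-1 : ℝ) ≤ 1), hftc, hG1, hG1', sub_zero]
  have hI1I2 : (∫ s in Set.Ioo (-1 : ℝ) 1, f1 s) = -∫ s in Set.Ioo (-1 : ℝ) 1, f2 s := by
    have hsplit : (∫ s in Set.Ioo (-1 : ℝ) 1, (f1 s + f2 s)) =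
        (∫ s in Set.Ioo (-1 : ℝ) 1, f1 s) + ∫ s in Set.Ioo (-1 : ℝ) 1, f2 s :=
      MeasureTheory.integral_add hf1int hf2int
    rw [hsplit] at hzero
    linarith
  -- positivity of ∫ f2
  have hI2pos : 0 < ∫ s in Set.Ioo (-1 : ℝ) 1, f2 s := by
    rw [MeasureTheory.setIntegral_pos_iff_support_of_nonneg_ae
      (Filter.Eventually.of_forall hf2nonneg) hf2int]
    have hsub : Set.Ioo (1 - δ₁) 1 ⊆ Function.support f2 ∩ Set.Ioo (-1 : ℝ) 1 := by
      intro s hs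
      have hsIoo : s ∈ Set.Ioo (-1 : ℝ) 1 := ⟨by linarith [hs.1], hs.2⟩
      have hFs := hFpos s hsIoo
      have hne : deriv F s ≠ 0 := hN1 s ⟨hs.1.le, by linarith [hs.2]⟩ (ne_of_lt hs.2)
      have hnum : (0 : ℝ) < (deriv F s) ^ 2 :=
        lt_of_le_of_ne (sq_nonneg _) (Ne.symm (pow_ne_zero 2 hne))
      have hden : (0 : ℝ) < Real.sqrt (2 * F s) := Real.sqrt_pos.mpr (by linarith)
      refine ⟨?_, hsIoo⟩
      simp only [Function.mem_support, hf2def]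
      exact ne_of_gt (div_pos hnum hden)
    calc (0 : ENNReal) < volume (Set.Ioo (1 - δ₁) 1) := by
          rw [Real.volume_Ioo]
          simp only [ENNReal.ofReal_pos]
          linarith
      _ ≤ volume (Function.support f2 ∩ Set.Ioo (-1 : ℝ) 1) := measure_mono hsub
  -- positivity of D
  have hDint : IntegrableOn (fun s => Real.sqrt (2 * F s)) (Set.Ioo (-1 : ℝ) 1) :=
    ((Real.continuous_sqrt.comp (by fun_prop : Continuous fun s => 2 * F s)).integrableOn_Icc).mono_set
      Set.Ioo_subset_Icc_self
  have hDpos : 0 < ∫ s in Set.Ioo (-1 : ℝ) 1, Real.sqrt (2 * F s) := by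
    rw [MeasureTheory.setIntegral_pos_iff_support_of_nonneg_ae
      (Filter.Eventually.of_forall fun s => Real.sqrt_nonneg _) hDint]
    have hsub : Set.Ioo (-1 : ℝ) 1 ⊆
        Function.support (fun s => Real.sqrt (2 * F s)) ∩ Set.Ioo (-1 : ℝ) 1 := by
      intro s hs
      refine ⟨?_, hs⟩
      simp only [Function.mem_support]
      exact ne_of_gt (Real.sqrt_pos.mpr (by linarith [hFpos s hs]))
    calc (0 : ENNReal) < volume (Set.Ioo (-1 : ℝ) 1) := by
          rw [Real.volume_Ioo]; norm_num
      _ ≤ _ := measure_mono hsub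
  -- relating ∫ √(2F) F'' to ∫ √F F''
  have hA : (∫ s in Set.Ioo (-1 : ℝ) 1, f1 s) =
      Real.sqrt 2 * ∫ s in Set.Ioo (-1 : ℝ) 1, Real.sqrt (F s) * deriv (deriv F) s := by
    rw [← MeasureTheory.integral_const_mul]
    apply MeasureTheory.setIntegral_congr_fun measurableSet_Ioo
    intro s _
    simp only [hf1def]
    rw [Real.sqrt_mul (by norm_num : (0:ℝ) ≤ 2)]
    ring
  set D := ∫ s in Set.Ioo (-1 : ℝ) 1, Real.sqrt (2 * F s) with hDdef
  set I2 := ∫ s in Set.Ioo (-1 : ℝ) 1, f2 s with hI2def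
  set A := ∫ s in Set.Ioo (-1 : ℝ) 1, Real.sqrt (F s) * deriv (deriv F) s with hAdef
  have hkey : Real.sqrt 2 * A = -I2 := by rw [← hA]; exact hI1I2
  have heq : (1 + (Real.sqrt 2 * τ / D) * A) = 1 - (τ / D) * I2 := by
    have hrw : (Real.sqrt 2 * τ / D) * A = (τ / D) * (Real.sqrt 2 * A) := by ring
    rw [hrw, hkey]; ring
  refine ⟨hf1int, hf2int, hI1I2, ?_, heq, ?_⟩
  · rw [hI1I2]
    simpa using hI2pos
  · rw [heq]
    have : 0 < (τ / D) * I2 := mul_pos (div_pos hτ hDpos) hI2pos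
    linarith
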